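/- For every integer n, the shift graph S_n has symmetric difference at most 2, i.e., sd(S_n) ≤ 2. -/

import Mathlib

open scoped symmDiff

/-- `sdAt G u v` is the number of vertices outside `{u, v}` adjacent to exactly one of `u, v`. -/
noncomputable def sdAt {V : Type*} (G : SimpleGraph V) (u v : V) : ℕ :=
  ((G.neighborSet u \ {v}) ∆ (G.neighborSet v \ {u})).ncard

/-- The symmetric difference of `G`: the maximum over induced subgraphs `H` with at least two
vertices of the minimum of `sdAt H u v` over pairs of distinct vertices of `H`. -/
noncomputable def sdNum {V : Type*} [Fintype V] (G : SimpleGraph V) : ℕ :=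
  sSup {k | ∃ s : Set V, 2 ≤ s.ncard ∧
    k = sInf {m | ∃ u v : ↥s, u ≠ v ∧ m = sdAt (G.induce s) u v}}

/-- The shift graph `S_n`: vertices are pairs `(i, j)` with `i < j` (of `[n]`), and distinct
vertices `(i, j)` and `(k, ℓ)` are adjacent whenever `j = k` or `ℓ = i`. -/
def shiftGraph (n : ℕ) : SimpleGraph {p : Fin n × Fin n // p.1 < p.2} where
  Adj u v := u ≠ v ∧ (u.1.2 = v.1.1 ∨ v.1.2 = u.1.1)
  symm := ⟨by rintro u v ⟨h1, h2⟩; exact ⟨h1.symm, h2.symm⟩⟩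
  loopless := ⟨fun u h => h.1 rfl⟩

lemma shiftGraph_key (n : ℕ) (s : Set {p : Fin n × Fin n // p.1 < p.2}) (hs : 2 ≤ s.ncard) :
    ∃ u v : ↥s, u ≠ v ∧ sdAt ((shiftGraph n).induce s) u v ≤ 2 := by
  classical
  set H := (shiftGraph n).induce s with hH
  set tl : ↥s → Fin n := fun w => w.val.val.1 with htl
  set hd : ↥s → Fin n := fun w => w.val.val.2 with hhd
  set Outs : Fin n → Set ↥s := fun x => {w | tl w = x} with hOuts
  set Ins : Fin n → Set ↥s := fun x => {w | hd w = x} with hIns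
  have hlt : ∀ w : ↥s, tl w < hd w := fun w => w.val.prop
  have adj : ∀ u v : ↥s, H.Adj u v ↔ (u.val ≠ v.val ∧ (hd u = tl v ∨ hd v = tl u)) :=
    fun u v => Iff.rfl
  have sd_le : ∀ (u v : ↥s) (A B : Set ↥s),
      ((H.neighborSet u \ {v}) ∆ (H.neighborSet v \ {u})) ⊆ A ∪ B →
      A.ncard ≤ 1 → B.ncard ≤ 1 → sdAt H u v ≤ 2 := by
    intro u v A B hsub hA hB
    have h1 : sdAt H u v ≤ (A ∪ B).ncard := Set.ncard_le_ncard hsub (Set.toFinite _)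
    have h2 : (A ∪ B).ncard ≤ A.ncard + B.ncard := Set.ncard_union_le A B
    omega
  by_cases h1 : ∃ a : Fin n, 2 ≤ (Outs a).ncard
  · -- some tail repeats: take the maximal such tail
    obtain ⟨a, ha, hamax⟩ := Set.exists_max_image {x : Fin n | 2 ≤ (Outs x).ncard} id
      (Set.toFinite _) h1
    obtain ⟨u, hu, v, hv, huv⟩ := (Set.one_lt_ncard (Set.toFinite _)).mp ha
    have hu' : tl u = a := hu
    have hv' : tl v = a := hv
    refine ⟨u, v, huv, sd_le u v (Outs (hd u)) (Outs (hd v)) ?_ ?_ ?_⟩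
    · intro w hw
      rw [Set.mem_symmDiff] at hw
      rcases hw with ⟨⟨hadj, hwv⟩, hnot⟩ | ⟨⟨hadj, hwu⟩, hnot⟩
      · rcases ((adj u w).mp hadj) with ⟨hne, hor | hor⟩
        · exact Or.inl hor.symm
        · exfalso
          apply hnot
          refine ⟨(adj v w).mpr ⟨?_, Or.inr (hor.trans (hu'.trans hv'.symm))⟩, ?_⟩
          · intro hvw
            have hvw' : v = w := Subtype.ext hvw
            have h3 : hd w = tl w := by rw [hor, hu', ← hv', hvw']
            exact absurd (h3 ▸ hlt w) (lt_irrefl _)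
          · intro hwu'
            rw [Set.mem_singleton_iff] at hwu'
            exact hne (by rw [hwu'])
      · rcases ((adj v w).mp hadj) with ⟨hne, hor | hor⟩
        · exact Or.inr hor.symm
        · exfalso
          apply hnot
          refine ⟨(adj u w).mpr ⟨?_, Or.inr (hor.trans (hv'.trans hu'.symm))⟩, ?_⟩
          · intro huw
            have huw' : u = w := Subtype.ext huw
            have h3 : hd w = tl w := by rw [hor, hv', ← hu', huw']
            exact absurd (h3 ▸ hlt w) (lt_irrefl _)
          · intro hwv'
            rw [Set.mem_singleton_iff] at hwv'
            exact hne (by rw [hwv'])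
    · by_contra hcon
      have h2 : 2 ≤ (Outs (hd u)).ncard := by omega
      have := hamax (hd u) h2
      have hau : a < hd u := hu' ▸ hlt u
      simp only [id] at this
      exact absurd hau (not_lt.mpr this)
    · by_contra hcon
      have h2 : 2 ≤ (Outs (hd v)).ncard := by omega
      have := hamax (hd v) h2
      have hav : a < hd v := hv' ▸ hlt v
      simp only [id] at this
      exact absurd hav (not_lt.mpr this)
  · by_cases h2 : ∃ b : Fin n, 2 ≤ (Ins b).ncard
    · -- some head repeats: take the minimal such head
      obtain ⟨b, hb, hbmin⟩ := Set.exists_min_image {x : Fin n | 2 ≤ (Ins x).ncard} id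
        (Set.toFinite _) h2
      obtain ⟨u, hu, v, hv, huv⟩ := (Set.one_lt_ncard (Set.toFinite _)).mp hb
      have hu' : hd u = b := hu
      have hv' : hd v = b := hv
      refine ⟨u, v, huv, sd_le u v (Ins (tl u)) (Ins (tl v)) ?_ ?_ ?_⟩
      · intro w hw
        rw [Set.mem_symmDiff] at hw
        rcases hw with ⟨⟨hadj, hwv⟩, hnot⟩ | ⟨⟨hadj, hwu⟩, hnot⟩
        · rcases ((adj u w).mp hadj) with ⟨hne, hor | hor⟩
          · exfalso
            apply hnot
            refine ⟨(adj v w).mpr ⟨?_, Or.inl ((hv'.trans hu'.symm).trans hor)⟩, ?_⟩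
            · intro hvw
              have hvw' : v = w := Subtype.ext hvw
              have h3 : tl w = hd w := by rw [← hor, hu', ← hv', hvw']
              exact absurd (h3 ▸ hlt w) (lt_irrefl _)
            · intro hwu'
              rw [Set.mem_singleton_iff] at hwu'
              exact hne (by rw [hwu'])
          · exact Or.inl hor
        · rcases ((adj v w).mp hadj) with ⟨hne, hor | hor⟩
          · exfalso
            apply hnot
            refine ⟨(adj u w).mpr ⟨?_, Or.inl ((hu'.trans hv'.symm).trans hor)⟩, ?_⟩
            · intro huw
              have huw' : u = w := Subtype.ext huw
              have h3 : tl w = hd w := by rw [← hor, hv', ← hu', huw']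
              exact absurd (h3 ▸ hlt w) (lt_irrefl _)
            · intro hwv'
              rw [Set.mem_singleton_iff] at hwv'
              exact hne (by rw [hwv'])
          · exact Or.inr hor
      · by_contra hcon
        have h3 : 2 ≤ (Ins (tl u)).ncard := by omega
        have := hbmin (tl u) h3
        have hau : tl u < b := hu' ▸ hlt u
        simp only [id] at this
        exact absurd hau (not_lt.mpr this)
      · by_contra hcon
        have h3 : 2 ≤ (Ins (tl v)).ncard := by omega
        have := hbmin (tl v) h3
        have hav : tl v < b := hv' ▸ hlt v
        simp only [id] at this
        exact absurd hav (not_lt.mpr this)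
    · -- all in- and out-degrees at most one
      push_neg at h1 h2
      have hO1 : ∀ x, (Outs x).ncard ≤ 1 := fun x => by have := h1 x; omega
      have hI1 : ∀ x, (Ins x).ncard ≤ 1 := fun x => by have := h2 x; omega
      have hsne : s.Nonempty := Set.nonempty_of_ncard_ne_zero (by omega)
      haveI : Nonempty ↥s := hsne.to_subtype
      obtain ⟨u, humax⟩ := Finite.exists_max hd
      have hOut : Outs (hd u) = ∅ := by
        ext w
        simp only [hOuts, Set.mem_setOf_eq, Set.mem_empty_iff_false, iff_false]
        intro hw
        exact absurd (hw ▸ hlt w) (not_lt.mpr (humax w))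
      have hNu : ∀ w, w ∈ H.neighborSet u → w ∈ Ins (tl u) := by
        intro w hw
        rcases ((adj u w).mp hw) with ⟨hne', hor | hor⟩
        · exfalso
          have hmem : w ∈ Outs (hd u) := hor.symm
          rw [hOut] at hmem
          exact Set.notMem_empty w hmem
        · exact hor
      obtain ⟨v, hvu, hND⟩ : ∃ v : ↥s, v ≠ u ∧ H.neighborSet u \ {v} = ∅ := by
        by_cases hIn : (Ins (tl u)).Nonempty
        · obtain ⟨v, hv⟩ := hIn
          have hv' : hd v = tl u := hv
          refine ⟨v, ?_, ?_⟩
          · intro h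
            rw [← h] at hv'
            exact absurd (hv' ▸ hlt v) (lt_irrefl _)
          · ext w
            simp only [Set.mem_diff, Set.mem_singleton_iff, Set.mem_empty_iff_false, iff_false,
              not_and, not_not]
            intro hw
            exact (Set.ncard_le_one_iff (Set.toFinite _)).mp (hI1 (tl u)) (hNu w hw) hv
        · obtain ⟨x, hx, y, hy, hxy⟩ := (Set.one_lt_ncard (Set.toFinite _)).mp hs
          have hNu0 : H.neighborSet u = ∅ := by
            ext w
            simp only [Set.mem_empty_iff_false, iff_false]
            intro hw
            exact hIn ⟨w, hNu w hw⟩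
          by_cases hxu : (⟨x, hx⟩ : ↥s) = u
          · refine ⟨⟨y, hy⟩, ?_, by rw [hNu0]; simp⟩
            intro h
            exact hxy (congrArg Subtype.val (hxu.trans h.symm))
          · exact ⟨⟨x, hx⟩, hxu, by rw [hNu0]; simp⟩
      refine ⟨u, v, fun h => hvu h.symm, sd_le u v (Ins (tl v)) (Outs (hd v)) ?_ (hI1 _) (hO1 _)⟩
      intro w hw
      rw [Set.mem_symmDiff] at hw
      rcases hw with ⟨hw1, _⟩ | ⟨⟨hadj, hwu⟩, _⟩
      · rw [hND] at hw1
        exact absurd hw1 (Set.notMem_empty w)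
      · rcases ((adj v w).mp hadj) with ⟨hne', hor | hor⟩
        · exact Or.inr hor.symm
        · exact Or.inl hor

theorem sdNum_shiftGraph_le_two (n : ℕ) : sdNum (shiftGraph n) ≤ 2 := by
  apply csSup_le'
  rintro k ⟨s, hs, rfl⟩
  obtain ⟨u, v, huv, hle⟩ := shiftGraph_key n s hs
  have hmem : sdAt ((shiftGraph n).induce s) u v ∈
      {m | ∃ u v : ↥s, u ≠ v ∧ m = sdAt ((shiftGraph n).induce s) u v} := ⟨u, v, huv, rfl⟩
  exact le_trans (Nat.sInf_le hmem) hle
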